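/- Let k ≥ 2 be an integer and let 𝒬 = [a,b,c] be a positive definite integral binary quadratic form of discriminant −D (D > 0, a > 0, b² − 4ac = −D), with CM-point τ_𝒬 := (−b + i√D)/(2a) and v_𝒬 := √D/(2a). Then for every z = x + iy in the upper half-plane with z ≠ τ_𝒬, D^{(1−k)/2} · 𝒬(z,1)^{k−1} · ∫₀^{artanh(√D/𝒬_z)} sinh(θ)^{2k−2} dθ = 2^{2−3k} · v_𝒬^{1−k} · (z − conj(τ_𝒬))^{2k−2} · X_{τ_𝒬}(z)^{k−1} · ∫₀^{1−|X_{τ_𝒬}(z)|²} t^{2k−2}(1−t)^{−k} dt, where 𝒬(z,1) := a z² + b z + c, 𝒬_z := (a(x²+y²)+bx+c)/y, and X_{τ_𝒬}(z) := (z − τ_𝒬)/(z − conj(τ_𝒬)). -/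

import Mathlib

/-- The real inverse hyperbolic tangent, `artanh x = (1/2) log((1+x)/(1−x))`. -/
noncomputable def artanh (x : ℝ) : ℝ := (1 / 2) * Real.log ((1 + x) / (1 - x))

open intervalIntegral Set

lemma pointwise_key (m : ℕ) (θ : ℝ) :
    (2 * Real.exp (-(2*θ))) * ((1 - Real.exp (-(2*θ))) ^ (2*m)
        * (((1 - (1 - Real.exp (-(2*θ)))) ^ (m+1))⁻¹))
      = 2 ^ (2*m+1) * Real.sinh θ ^ (2*m) := by
  have hu : Real.exp θ ≠ 0 := Real.exp_ne_zero θ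
  have h1 : Real.exp (-(2*θ)) = ((Real.exp θ)^2)⁻¹ := by
    rw [Real.exp_neg, two_mul, Real.exp_add, sq]
  have h2 : Real.sinh θ = (Real.exp θ - (Real.exp θ)⁻¹) / 2 := by
    rw [Real.sinh_eq, Real.exp_neg]
  rw [h1, h2]
  have h3 : 1 - (Real.exp θ ^ 2)⁻¹ = (Real.exp θ)⁻¹ * (Real.exp θ - (Real.exp θ)⁻¹) := by
    rw [mul_sub, inv_mul_cancel₀ hu]; ring
  have key : (Real.exp θ ^ 2)⁻¹ * (Real.exp θ)⁻¹ ^ (2*m) * (Real.exp θ ^ 2) ^ (m+1) = 1 := by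
    rw [show (Real.exp θ ^ 2)⁻¹ * (Real.exp θ)⁻¹ ^ (2*m) * (Real.exp θ ^ 2) ^ (m+1)
      = ((Real.exp θ)⁻¹ * Real.exp θ) ^ (2*m+2) by ring, inv_mul_cancel₀ hu, one_pow]
  have key2 : (2:ℝ) ^ (2*m+1) * ((2:ℝ) ^ (2*m))⁻¹ = 2 := by
    rw [pow_succ]; field_simp
  rw [sub_sub_cancel, inv_pow, inv_inv, h3, mul_pow, div_pow]
  linear_combination (2 * (Real.exp θ - (Real.exp θ)⁻¹) ^ (2*m)) * key
    - (Real.exp θ - (Real.exp θ)⁻¹) ^ (2*m) * key2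

lemma lemA (k : ℕ) (hk : 1 ≤ k) (R : ℝ) (hR0 : 0 < R) (hR1 : R ≤ 1) :
    (∫ t in (0:ℝ)..(1 - R), t ^ (2*k-2) * (1-t) ^ (-(k:ℤ)))
      = 2^(2*k-1) * ∫ θ in (0:ℝ)..(-Real.log R / 2), Real.sinh θ ^ (2*k-2) := by
  obtain ⟨m, rfl⟩ : ∃ m, k = m + 1 := ⟨k-1, by omega⟩
  have e1 : 2*(m+1)-2 = 2*m := by omega
  have e2 : 2*(m+1)-1 = 2*m+1 := by omega
  simp only [e1, e2]
  have hzp : ∀ t : ℝ, (1-t) ^ (-((m+1:ℕ):ℤ)) = ((1-t)^(m+1))⁻¹ := by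
    intro t; rw [zpow_neg, zpow_natCast]
  set Θ : ℝ := -Real.log R / 2 with hΘdef
  have hΘ : 0 ≤ Θ := by
    have := Real.log_nonpos hR0.le hR1
    rw [hΘdef]; linarith
  have hfΘ : 1 - Real.exp (-(2*Θ)) = 1 - R := by
    have h : -(2*Θ) = Real.log R := by rw [hΘdef]; ring
    rw [h, Real.exp_log hR0]
  have hder : ∀ x : ℝ, HasDerivAt (fun θ => 1 - Real.exp (-(2*θ)))
      (2 * Real.exp (-(2*x))) x := by
    intro x
    have h1 : HasDerivAt (fun θ : ℝ => -(2*θ)) (-2) x := by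
      exact (((hasDerivAt_id x).const_mul (2:ℝ)).neg).congr_deriv (by ring)
    have h2 := h1.exp
    have h3 := h2.const_sub 1
    exact h3.congr_deriv (by ring)
  have himg : ∀ θ ∈ uIcc (0:ℝ) Θ, R ≤ 1 - (1 - Real.exp (-(2*θ))) := by
    intro θ hθ
    rw [uIcc_of_le hΘ] at hθ
    have h2 : Real.exp (-(2*Θ)) ≤ Real.exp (-(2*θ)) :=
      Real.exp_le_exp.2 (by nlinarith [hθ.2])
    have : Real.exp (-(2*Θ)) = R := by
      have h : -(2*Θ) = Real.log R := by rw [hΘdef]; ring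
      rw [h, Real.exp_log hR0]
    linarith [this ▸ h2]
  have hg : ContinuousOn (fun t : ℝ => t ^ (2*m) * ((1-t)^(m+1))⁻¹)
      ((fun θ => 1 - Real.exp (-(2*θ))) '' uIcc (0:ℝ) Θ) := by
    apply ContinuousOn.mul (by fun_prop)
    apply ContinuousOn.inv₀ (by fun_prop)
    rintro t ⟨θ, hθ, rfl⟩
    exact pow_ne_zero _ (lt_of_lt_of_le hR0 (himg θ hθ)).ne'
  have hsub := integral_comp_smul_deriv'' (a := (0:ℝ)) (b := Θ)
    (f := fun θ => 1 - Real.exp (-(2*θ))) (f' := fun θ => 2 * Real.exp (-(2*θ)))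
    (g := fun t => t ^ (2*m) * ((1-t)^(m+1))⁻¹)
    (by fun_prop)
    (fun x _ => (hder x).hasDerivWithinAt)
    (by fun_prop)
    hg
  simp only at hsub
  rw [show (1:ℝ) - Real.exp (-(2*0)) = 0 by norm_num, hfΘ] at hsub
  calc (∫ t in (0:ℝ)..(1-R), t ^ (2*m) * (1-t) ^ (-((m+1:ℕ):ℤ)))
      = ∫ t in (0:ℝ)..(1-R), t ^ (2*m) * ((1-t)^(m+1))⁻¹ := by simp only [hzp]
    _ = ∫ θ in (0:ℝ)..Θ, (2 * Real.exp (-(2*θ)))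
          • ((1 - Real.exp (-(2*θ))) ^ (2*m) * ((1-(1 - Real.exp (-(2*θ))))^(m+1))⁻¹) := by
        rw [← hsub]; rfl
    _ = ∫ θ in (0:ℝ)..Θ, 2 ^ (2*m+1) * Real.sinh θ ^ (2*m) := by
        apply intervalIntegral.integral_congr
        intro θ _
        simpa [smul_eq_mul] using pointwise_key m θ
    _ = 2^(2*m+1) * ∫ θ in (0:ℝ)..Θ, Real.sinh θ ^ (2*m) :=
        intervalIntegral.integral_const_mul _ _


set_option maxHeartbeats 1000000 in
/-- For an integer `k ≥ 2` and a positive definite integral binary quadratic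
form `𝒬 = [a,b,c]` of discriminant `−D` with CM-point `τ_𝒬` and `v_𝒬 = √D/(2a)`, for every
`z` in the upper half-plane with `z ≠ τ_𝒬`:
`D^{(1−k)/2} 𝒬(z,1)^{k−1} ∫₀^{artanh(√D/𝒬_z)} sinh(θ)^{2k−2} dθ
  = 2^{2−3k} v_𝒬^{1−k} (z − conj τ_𝒬)^{2k−2} X_{τ_𝒬}(z)^{k−1}
      ∫₀^{1−|X_{τ_𝒬}(z)|²} t^{2k−2}(1−t)^{−k} dt`. -/
theorem stmt_11 (k : ℕ) (hk : 2 ≤ k) (a b c D : ℤ) (hD : 0 < D) (ha : 0 < a)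
    (hdisc : b ^ 2 - 4 * a * c = -D)
    (τ : UpperHalfPlane)
    (hτ : (τ : ℂ) = (-(b : ℂ) + (Real.sqrt D : ℂ) * Complex.I) / (2 * (a : ℂ)))
    (vQ : ℝ) (hvQ : vQ = Real.sqrt D / (2 * a))
    (z : UpperHalfPlane) (hz : z ≠ τ) :
    ((Real.sqrt D ^ ((1 : ℤ) - (k : ℤ)) : ℝ) : ℂ)
        * ((a : ℂ) * (z : ℂ) ^ 2 + (b : ℂ) * (z : ℂ) + (c : ℂ)) ^ (k - 1)
        * ((∫ θ in (0:ℝ)..artanh (Real.sqrt D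
              / (((a : ℝ) * (z.re ^ 2 + z.im ^ 2) + (b : ℝ) * z.re + (c : ℝ)) / z.im)),
            Real.sinh θ ^ (2 * k - 2) : ℝ) : ℂ)
      = (2 : ℂ) ^ ((2 : ℤ) - 3 * (k : ℤ)) * ((vQ ^ ((1 : ℤ) - (k : ℤ)) : ℝ) : ℂ)
          * ((z : ℂ) - (starRingEnd ℂ) (τ : ℂ)) ^ (2 * k - 2)
          * (((z : ℂ) - (τ : ℂ)) / ((z : ℂ) - (starRingEnd ℂ) (τ : ℂ))) ^ (k - 1)
          * ((∫ t in
                (0:ℝ)..(1 - ‖((z : ℂ) - (τ : ℂ))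
                    / ((z : ℂ) - (starRingEnd ℂ) (τ : ℂ))‖ ^ 2),
              t ^ (2 * k - 2) * (1 - t) ^ (-(k : ℤ)) : ℝ) : ℂ) := by
  have hk1 : 1 ≤ k := by omega
  set s := Real.sqrt D with hs_def
  have hDr : (0:ℝ) < (D:ℝ) := by exact_mod_cast hD
  have hs : 0 < s := Real.sqrt_pos.2 hDr
  have hs2 : s^2 = (D:ℝ) := Real.sq_sqrt hDr.le
  have har : (0:ℝ) < (a:ℝ) := by exact_mod_cast ha
  have hane : (a:ℝ) ≠ 0 := har.ne'
  set u : ℝ := -(b:ℝ)/(2*a) with hu_def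
  set v : ℝ := s/(2*a) with hv_def
  have hv : 0 < v := by rw [hv_def]; positivity
  have hτc : (τ:ℂ) = Complex.ofReal u + Complex.ofReal v * Complex.I := by
    rw [hτ, hu_def, hv_def]
    push_cast
    have h2a : (2*(a:ℂ)) ≠ 0 := by
      simp only [ne_eq, mul_eq_zero]
      push_neg
      exact ⟨two_ne_zero, by exact_mod_cast ha.ne'⟩
    field_simp
  have hτre : (τ:ℂ).re = u := by rw [hτc]; simp
  have hτim : (τ:ℂ).im = v := by rw [hτc]; simp
  have hconj : (starRingEnd ℂ) (τ:ℂ) = Complex.ofReal u - Complex.ofReal v * Complex.I := by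
    rw [hτc]
    simp [Complex.ext_iff]
  set x := z.re with hx_def
  set y := z.im with hy_def
  have hy : 0 < y := z.im_pos
  have hzx : (z:ℂ).re = x := z.coe_re
  have hzy : (z:ℂ).im = y := z.coe_im
  have hzc : (z:ℂ) = Complex.ofReal x + Complex.ofReal y * Complex.I := by
    rw [← hzx, ← hzy]
    exact (Complex.re_add_im _).symm
  have hzτ : (z:ℂ) ≠ (τ:ℂ) := fun h => hz (UpperHalfPlane.ext h)
  have hNM : (x-u)^2 + (y-v)^2 < (x-u)^2 + (y+v)^2 := by nlinarith
  have hN : 0 < (x-u)^2 + (y-v)^2 := by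
    rcases lt_or_eq_of_le (by positivity : (0:ℝ) ≤ (x-u)^2 + (y-v)^2) with h | h
    · exact h
    · exfalso
      apply hzτ
      have h1 : (x-u)^2 = 0 := le_antisymm (by nlinarith [sq_nonneg (y-v)]) (sq_nonneg _)
      have h2 : (y-v)^2 = 0 := le_antisymm (by nlinarith [sq_nonneg (x-u)]) (sq_nonneg _)
      have hx1 : x = u := by have := sq_eq_zero_iff.1 h1; linarith
      have hy1 : y = v := by have := sq_eq_zero_iff.1 h2; linarith
      rw [hzc, hτc, hx1, hy1]
  have hM : 0 < (x-u)^2 + (y+v)^2 := lt_trans hN hNM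
  have hdiscR : (b:ℝ)^2 - 4*(a:ℝ)*(c:ℝ) = -(D:ℝ) := by exact_mod_cast hdisc
  have hkey : (a:ℝ)*(x^2+y^2) + b*x + c = a*((x-u)^2 + (y-v)^2) + s*y := by
    rw [hu_def, hv_def]
    field_simp
    linear_combination -hs2 - hdiscR
  have hkey2 : (a:ℝ)*(x^2+y^2) + b*x + c = a*((x-u)^2 + (y+v)^2) - s*y := by
    rw [hu_def, hv_def]
    field_simp
    linear_combination -hs2 - hdiscR
  set Qz := ((a:ℝ)*(x^2+y^2) + (b:ℝ)*x + (c:ℝ))/y with hQz_def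
  have hQzN : Qz - s = a*((x-u)^2 + (y-v)^2)/y := by
    rw [hQz_def, hkey]
    field_simp
    try ring
  have hQzM : Qz + s = a*((x-u)^2 + (y+v)^2)/y := by
    rw [hQz_def, hkey2]
    field_simp
    try ring
  have hQzs : s < Qz := by
    have : 0 < a*((x-u)^2 + (y-v)^2)/y := by positivity
    linarith [hQzN ▸ this]
  have hQz0 : 0 < Qz := lt_trans hs hQzs
  set R := ‖((z : ℂ) - (τ : ℂ)) / ((z : ℂ) - (starRingEnd ℂ) (τ : ℂ))‖ ^ 2
    with hR_def
  have h1 : ((z:ℂ) - (τ:ℂ)).re = x - u := by rw [Complex.sub_re, hzx, hτre]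
  have h2 : ((z:ℂ) - (τ:ℂ)).im = y - v := by rw [Complex.sub_im, hzy, hτim]
  have h3 : ((z:ℂ) - (starRingEnd ℂ) (τ:ℂ)).re = x - u := by
    rw [Complex.sub_re, hzx, hconj]; simp
  have h4 : ((z:ℂ) - (starRingEnd ℂ) (τ:ℂ)).im = y + v := by
    rw [Complex.sub_im, hzy, hconj]; simp; try ring
  have hRNM : R = ((x-u)^2 + (y-v)^2) / ((x-u)^2 + (y+v)^2) := by
    rw [hR_def, norm_div, div_pow, Complex.sq_norm, Complex.sq_norm,
      Complex.normSq_apply, Complex.normSq_apply, h1, h2, h3, h4]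
    ring
  have hR0 : 0 < R := by rw [hRNM]; positivity
  have hR1 : R < 1 := by
    rw [hRNM, div_lt_one hM]
    exact hNM
  have hart : artanh (s / Qz) = -Real.log R / 2 := by
    have h1 : (1 + s/Qz)/(1 - s/Qz) = R⁻¹ := by
      rw [hRNM]
      have hd1 : (0:ℝ) < 1 - s/Qz := by
        rw [sub_pos, div_lt_one hQz0]; exact hQzs
      have hQ : (1 + s/Qz)/(1 - s/Qz) = (Qz+s)/(Qz-s) := by
        rw [div_eq_div_iff hd1.ne' (by linarith : Qz - s ≠ 0)]
        field_simp
        try ring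
      rw [hQ, hQzN, hQzM, inv_div]
      have hy' := hy.ne'
      have hN' := hN.ne'
      field_simp
      try ring
    rw [artanh, h1, Real.log_inv]
    ring
  rw [hart]
  rw [lemA k hk1 R hR0 hR1.le]
  have hw1 : (z:ℂ) - (τ:ℂ) ≠ 0 := sub_ne_zero.2 hzτ
  have hw2 : (z:ℂ) - (starRingEnd ℂ) (τ:ℂ) ≠ 0 := by
    intro h
    have him := congrArg Complex.im h
    simp [Complex.sub_im, hzy, hconj] at him
    linarith
  have hcuR : 2*(a:ℝ)*u = -(b:ℝ) := by rw [hu_def]; field_simp; try ring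
  have hccR : (a:ℝ)*(u^2+v^2) = (c:ℝ) := by
    rw [hu_def, hv_def]
    field_simp
    linear_combination hs2 + hdiscR
  have hcuC : 2*(a:ℂ)*(u:ℂ) = -(b:ℂ) := by exact_mod_cast congrArg Complex.ofReal hcuR
  have hccC : (a:ℂ)*((u:ℂ)^2+(v:ℂ)^2) = (c:ℂ) := by
    exact_mod_cast congrArg Complex.ofReal hccR
  have hQfac : (a:ℂ)*(z:ℂ)^2 + (b:ℂ)*(z:ℂ) + (c:ℂ)
      = (a:ℂ) * (((z:ℂ)-(τ:ℂ)) * ((z:ℂ)-(starRingEnd ℂ) (τ:ℂ))) := by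
    rw [hconj, hτc]
    linear_combination (z:ℂ) * hcuC - hccC + (a:ℂ)*(v:ℂ)^2 * Complex.I_sq
  have hC : ((s ^ ((1:ℤ) - (k:ℤ)) : ℝ) : ℂ)
        * ((a : ℂ) * (z : ℂ) ^ 2 + (b : ℂ) * (z : ℂ) + (c : ℂ)) ^ (k - 1)
      = (2 : ℂ) ^ ((2 : ℤ) - 3 * (k : ℤ)) * ((vQ ^ ((1 : ℤ) - (k : ℤ)) : ℝ) : ℂ)
          * ((z : ℂ) - (starRingEnd ℂ) (τ : ℂ)) ^ (2 * k - 2)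
          * (((z : ℂ) - (τ : ℂ)) / ((z : ℂ) - (starRingEnd ℂ) (τ : ℂ))) ^ (k - 1)
          * (((2:ℝ) ^ (2*k-1) : ℝ) : ℂ) := by
    obtain ⟨m, rfl⟩ : ∃ m, k = m + 2 := ⟨k-2, by omega⟩
    have e1 : (1:ℤ) - ((m+2:ℕ):ℤ) = -((m+1:ℕ):ℤ) := by push_cast; ring
    have e2 : (2:ℤ) - 3*((m+2:ℕ):ℤ) = -((3*m+4:ℕ):ℤ) := by push_cast; ring
    have e3 : (m+2) - 1 = m+1 := by omega
    have e4 : 2*(m+2) - 2 = 2*m+2 := by omega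
    have e5 : 2*(m+2) - 1 = 2*m+3 := by omega
    rw [hQfac, hvQ, e1, e2, e3, e4, e5, zpow_neg, zpow_natCast, zpow_neg, zpow_natCast,
      zpow_neg, zpow_natCast]
    rw [Complex.ofReal_inv, Complex.ofReal_inv, Complex.ofReal_pow, Complex.ofReal_pow,
      Complex.ofReal_div]
    push_cast
    rw [div_pow, div_pow]
    simp only [mul_pow]
    have hsC : (s:ℂ) ≠ 0 := by exact_mod_cast hs.ne'
    have haC : (a:ℂ) ≠ 0 := by exact_mod_cast ha.ne'
    have h2aC : ((2:ℂ)*(a:ℂ)) ≠ 0 := mul_ne_zero two_ne_zero haC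
    field_simp
    ring
  rw [Complex.ofReal_mul]
  linear_combination ((∫ θ in (0:ℝ)..(-Real.log R / 2), Real.sinh θ ^ (2*k-2) : ℝ) : ℂ) * hC
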